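/- Let x ≥ 1 and y > 0 be reals, let f : ℕ → ℂ be supported on the integers in [1, x], and let α, β be real. Then Σ_{n ∈ ℤ} (Σ_{n < m ≤ n+y} f(m) e(αm)) · e(βn) = F(x; α + β) · E_y(−β), where the outer sum over integers n has only finitely many nonzero terms (all with −y < n < x). -/

import Mathlib

open Finset

/-- `e(β) = exp(2πiβ)`. -/
noncomputable def e (β : ℝ) : ℂ := Complex.exp (2 * Real.pi * Complex.I * β)


lemma e_add (a b : ℝ) : e (a + b) = e a * e b := by
  simp only [e, ← Complex.exp_add]
  push_cast
  ring_nf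

/-- **Lemma (Fourier transform of the short-interval sums).** For `x ≥ 1`, `y > 0`,
`f` supported on the integers of `[1,x]`, and real `α, β`:
`Σ_{n ∈ ℤ} (Σ_{n < m ≤ n+y} f(m) e(αm)) e(βn) = F(x; α+β) · E_y(-β)`,
where `F(x; γ) = Σ_{1 ≤ n ≤ x} f(n) e(γn)` and `E_y(γ) = Σ_{1 ≤ n ≤ y} e(γn)`.
(The sum over `ℤ` has finitely many nonzero terms, hence is an unconditional `tsum`.) -/
theorem fourier_transform_short_interval_sum
    (x y : ℝ) (hx : 1 ≤ x) (hy : 0 < y) (f : ℕ → ℂ)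
    (hf : ∀ m : ℕ, f m ≠ 0 → 1 ≤ m ∧ (m : ℝ) ≤ x) (α β : ℝ) :
    ∑' n : ℤ, (∑ m ∈ Finset.Ioc n ⌊(n : ℝ) + y⌋, f m.toNat * e (α * m)) * e (β * n) =
      (∑ n ∈ Finset.Icc 1 ⌊x⌋₊, f n * e ((α + β) * n)) *
        ∑ n ∈ Finset.Icc 1 ⌊y⌋₊, e (-β * n) := by
  set Y : ℤ := (⌊y⌋₊ : ℤ) with hYdef
  set X : ℤ := (⌊x⌋₊ : ℤ) with hXdef
  have hf0 : f 0 = 0 := by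
    by_contra h; exact absurd (hf 0 h).1 (by norm_num)
  -- the function in each k-slice
  set g : ℤ → ℤ → ℂ := fun k n => f (n + k).toNat * e (α * (n + k)) * e (β * n) with hg
  -- support of g k
  have hsupp : ∀ k : ℤ, ∀ n : ℤ, n ∉ Finset.Icc (1 - k) (X - k) → g k n = 0 := by
    intro k n hn
    by_contra h
    have hfne : f (n + k).toNat ≠ 0 := by
      intro h0; apply h; simp [hg, h0]
    obtain ⟨h1, h2⟩ := hf _ hfne
    have hpos : (1 : ℤ) ≤ n + k := by
      by_contra hle
      push_neg at hle
      rw [Int.toNat_of_nonpos (by omega)] at hfne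
      exact hfne hf0
    have htn : ((n + k).toNat : ℤ) = n + k := Int.toNat_of_nonneg (by omega)
    have hle : n + k ≤ X := by
      rw [hXdef]
      have : ((n + k).toNat : ℤ) ≤ (⌊x⌋₊ : ℤ) := by
        exact_mod_cast Nat.le_floor (by exact_mod_cast h2 : ((n+k).toNat : ℝ) ≤ x)
      omega
    exact hn (Finset.mem_Icc.mpr ⟨by omega, by omega⟩)
  have hsummable : ∀ k : ℤ, Summable (g k) := fun k =>
    summable_of_ne_finset_zero (hsupp k)
  -- rewrite each term of the tsum as a sum over k ∈ Ioc 0 Y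
  have hterm : ∀ n : ℤ,
      (∑ m ∈ Finset.Ioc n ⌊(n : ℝ) + y⌋, f m.toNat * e (α * m)) * e (β * n)
        = ∑ k ∈ Finset.Ioc (0 : ℤ) Y, g k n := by
    intro n
    have hfl : ⌊(n : ℝ) + y⌋ = n + Y := by
      rw [Int.floor_intCast_add, hYdef, Int.natCast_floor_eq_floor hy.le]
    rw [hfl, Finset.sum_mul]
    rw [show Finset.Ioc n (n + Y) = Finset.map (addLeftEmbedding n) (Finset.Ioc 0 Y) by
      rw [Finset.map_add_left_Ioc]; simp]
    rw [Finset.sum_map]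
    refine Finset.sum_congr rfl fun k hk => ?_
    simp only [hg, addLeftEmbedding_apply]
    push_cast
    ring_nf
  rw [tsum_congr hterm, Summable.tsum_finsetSum (fun k _ => hsummable k)]
  -- compute each inner tsum
  have hkey : ∀ k ∈ Finset.Ioc (0 : ℤ) Y,
      ∑' n : ℤ, g k n
        = (∑ m ∈ Finset.Icc 1 ⌊x⌋₊, f m * e ((α + β) * m)) * e (-β * k) := by
    intro k hk
    have := (Equiv.subRight k).tsum_eq (g k)
    rw [← this]
    have heq : ∀ m : ℤ, g k ((Equiv.subRight k) m)
        = f m.toNat * e (α * m) * e (β * (m - k)) := by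
      intro m; simp [hg, Equiv.subRight]
    rw [tsum_congr heq]
    have hsupp2 : ∀ m : ℤ, m ∉ Finset.Icc (1 : ℤ) X →
        f m.toNat * e (α * m) * e (β * (m - k)) = 0 := by
      intro m hm
      have := hsupp k (m - k) (by
        intro hmem
        exact hm (by rw [Finset.mem_Icc] at *; omega))
      simpa [hg, Equiv.subRight] using this
    rw [tsum_eq_sum hsupp2]
    rw [Finset.sum_mul]
    refine Finset.sum_nbij' Int.toNat (Nat.cast : ℕ → ℤ) ?_ ?_ ?_ ?_ ?_
    · intro m hm
      rw [Finset.mem_Icc] at *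
      omega
    · intro m hm
      rw [Finset.mem_Icc] at *
      omega
    · intro m hm; rw [Finset.mem_Icc] at hm; omega
    · intro m hm; simp
    · intro m hm
      rw [Finset.mem_Icc] at hm
      have htn : ((m.toNat : ℤ) : ℝ) = (m : ℝ) := by
        have : (m.toNat : ℤ) = m := Int.toNat_of_nonneg (by omega)
        exact_mod_cast this
      push_cast at htn ⊢
      rw [htn]
      have h1 : (α + β) * (m : ℝ) = α * m + β * m := by ring
      have h2 : β * ((m : ℝ) - k) = β * m + (-β * k) := by ring
      rw [h1, h2, e_add, e_add]
      ring
  rw [Finset.sum_congr rfl hkey, ← Finset.mul_sum]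
  congr 1
  -- final: ∑ k ∈ Ioc 0 Y (ℤ), e(-β k) = ∑ n ∈ Icc 1 ⌊y⌋₊ (ℕ), e(-β n)
  refine Finset.sum_nbij' Int.toNat (Nat.cast : ℕ → ℤ) ?_ ?_ ?_ ?_ ?_
  · intro k hk; rw [Finset.mem_Ioc] at hk; rw [Finset.mem_Icc]; omega
  · intro n hn; rw [Finset.mem_Icc] at hn; rw [Finset.mem_Ioc]; omega
  · intro k hk; rw [Finset.mem_Ioc] at hk; omega
  · intro n hn; simp
  · intro k hk
    rw [Finset.mem_Ioc] at hk
    have : ((k.toNat : ℤ) : ℝ) = (k : ℝ) := by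
      have : (k.toNat : ℤ) = k := Int.toNat_of_nonneg (by omega)
      exact_mod_cast this
    push_cast at this ⊢
    rw [this]
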